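/- Let ⟨F, G, 𝔽, 𝔾, H_grd, F_exp, G_exp, θ⟩ be an interpolant lifting base, let 𝔽𝔾 = 𝔽 ∪ 𝔾, let {t₁,…,tₙ} be the set of the 𝔽𝔾-terms with an 𝔽𝔾-terms-maximal occurrence in H_grd, ordered such that if tᵢ is a strict subterm of tⱼ then i < j, let v₁,…,vₙ be fresh variables, let σ = {vᵢ ↦ tᵢ}, and for each i let Qᵢ = ∃ if tᵢ is an 𝔽-term and Qᵢ = ∀ if tᵢ is a 𝔾-term. Then F ⊨ Q₁v₁ … Qₙvₙ H_grd⁻σ. -/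
import Mathlib


open Classical

namespace CTIF

/-- First-order terms: variables and applications of function symbols
(a function symbol is a natural number used with an arity). -/
inductive Tm : Type where
  | var : ℕ → Tm
  | app : ℕ → (n : ℕ) → (Fin n → Tm) → Tm

/-- First-order formulas without equality. -/
inductive Fml : Type where
  | tru : Fml
  | fls : Fml
  | atom : ℕ → (n : ℕ) → (Fin n → Tm) → Fml
  | neg : Fml → Fml
  | conj : Fml → Fml → Fml
  | disj : Fml → Fml → Fml
  | all : ℕ → Fml → Fml
  | exi : ℕ → Fml → Fml

/-- A structure: interpretation of all function and predicate symbols (at every arity). -/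
structure Struc (D : Type) : Type where
  fn : ℕ → (n : ℕ) → (Fin n → D) → D
  pr : ℕ → (n : ℕ) → (Fin n → D) → Prop

def Tm.eval {D : Type} (M : Struc D) (a : ℕ → D) : Tm → D
  | .var x => a x
  | .app f n ts => M.fn f n (fun i => (ts i).eval M a)

def Fml.sat {D : Type} : Fml → Struc D → (ℕ → D) → Prop
  | .tru, _, _ => True
  | .fls, _, _ => False
  | .atom p n ts, M, a => M.pr p n (fun i => (ts i).eval M a)
  | .neg F, M, a => ¬ F.sat M a
  | .conj F G, M, a => F.sat M a ∧ G.sat M a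
  | .disj F G, M, a => F.sat M a ∨ G.sat M a
  | .all x F, M, a => ∀ d, F.sat M (Function.update a x d)
  | .exi x F, M, a => ∃ d, F.sat M (Function.update a x d)

/-- Entailment: every model (with any variable assignment) of `F` satisfies `G`. -/
def entails (F G : Fml) : Prop :=
  ∀ (D : Type), Nonempty D → ∀ (M : Struc D) (a : ℕ → D), F.sat M a → G.sat M a

def Tm.vars : Tm → Set ℕ
  | .var x => {x}
  | .app _ _ ts => ⋃ i, (ts i).vars

/-- Function symbols (with their arity) occurring in a term. -/
def Tm.funs : Tm → Set (ℕ × ℕ)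
  | .var _ => ∅
  | .app f n ts => insert (f, n) (⋃ i, (ts i).funs)

def Tm.isGround (t : Tm) : Prop := t.vars = ∅

/-- `t` is a ground term all of whose function symbols come from `S`. -/
def Tm.builtFrom (S : Set (ℕ × ℕ)) : Tm → Prop
  | .var _ => False
  | .app f n ts => (f, n) ∈ S ∧ ∀ i, Tm.builtFrom S (ts i)

/-- `t` occurs (as a subterm) in the given term. -/
def Tm.occursIn (t : Tm) : Tm → Prop
  | .var x => t = Tm.var x
  | .app f n ts => t = Tm.app f n ts ∨ ∃ i, Tm.occursIn t (ts i)

/-- `s` is a strict subterm of `t`. -/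
def Tm.strictSub (s t : Tm) : Prop := s ≠ t ∧ s.occursIn t

def Fml.funs : Fml → Set (ℕ × ℕ)
  | .tru => ∅
  | .fls => ∅
  | .atom _ _ ts => ⋃ i, (ts i).funs
  | .neg F => F.funs
  | .conj F G => F.funs ∪ G.funs
  | .disj F G => F.funs ∪ G.funs
  | .all _ F => F.funs
  | .exi _ F => F.funs

/-- Predicate symbols with the polarity (`true` = positive) of their occurrences;
the second argument is the polarity of the context. -/
def Fml.preds : Fml → Bool → Set (ℕ × Bool)
  | .tru, _ => ∅
  | .fls, _ => ∅
  | .atom p _ _, pol => {(p, pol)}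
  | .neg F, pol => F.preds (!pol)
  | .conj F G, pol => F.preds pol ∪ G.preds pol
  | .disj F G, pol => F.preds pol ∪ G.preds pol
  | .all _ F, pol => F.preds pol
  | .exi _ F, pol => F.preds pol

/-- pred(F): predicates paired with the polarities of their occurrences in `F`. -/
def Fml.pred (F : Fml) : Set (ℕ × Bool) := F.preds true

/-- Predicate symbols occurring in a formula (disregarding polarity). -/
def Fml.predSyms : Fml → Set ℕ
  | .tru => ∅
  | .fls => ∅
  | .atom p _ _ => {p}
  | .neg F => F.predSyms
  | .conj F G => F.predSyms ∪ G.predSyms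
  | .disj F G => F.predSyms ∪ G.predSyms
  | .all _ F => F.predSyms
  | .exi _ F => F.predSyms

def Fml.free : Fml → Set ℕ
  | .tru => ∅
  | .fls => ∅
  | .atom _ _ ts => ⋃ i, (ts i).vars
  | .neg F => F.free
  | .conj F G => F.free ∪ G.free
  | .disj F G => F.free ∪ G.free
  | .all x F => F.free \ {x}
  | .exi x F => F.free \ {x}

/-- Variables occurring bound (i.e. quantified upon) in a formula. -/
def Fml.bound : Fml → Set ℕ
  | .tru => ∅
  | .fls => ∅
  | .atom _ _ _ => ∅
  | .neg F => F.bound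
  | .conj F G => F.bound ∪ G.bound
  | .disj F G => F.bound ∪ G.bound
  | .all x F => insert x F.bound
  | .exi x F => insert x F.bound

def Fml.isQF : Fml → Prop
  | .tru => True
  | .fls => True
  | .atom _ _ _ => True
  | .neg F => F.isQF
  | .conj F G => F.isQF ∧ G.isQF
  | .disj F G => F.isQF ∧ G.isQF
  | .all _ _ => False
  | .exi _ _ => False

def Fml.isGround (F : Fml) : Prop := F.isQF ∧ F.free = ∅

def Fml.isSentence (F : Fml) : Prop := F.free = ∅

/-- Substitutions: mappings from variables to terms. -/
abbrev Subst := ℕ → Tm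

def Subst.dom (σ : Subst) : Set ℕ := {x | σ x ≠ Tm.var x}

def Subst.rng (σ : Subst) : Set Tm := {t | ∃ x ∈ σ.dom, σ x = t}

def Subst.isGround (σ : Subst) : Prop := ∀ x ∈ σ.dom, (σ x).isGround

/-- Injective substitution: distinct domain variables are mapped to distinct terms. -/
def Subst.inj (σ : Subst) : Prop := ∀ x ∈ σ.dom, ∀ y ∈ σ.dom, σ x = σ y → x = y

def Tm.subst (σ : Subst) : Tm → Tm
  | .var x => σ x
  | .app f n ts => .app f n (fun i => (ts i).subst σ)

/-- Substitution application to formulas (free occurrences of variables are replaced). -/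
def Fml.subst (σ : Subst) : Fml → Fml
  | .tru => .tru
  | .fls => .fls
  | .atom p n ts => .atom p n (fun i => (ts i).subst σ)
  | .neg F => .neg (F.subst σ)
  | .conj F G => .conj (F.subst σ) (G.subst σ)
  | .disj F G => .disj (F.subst σ) (G.subst σ)
  | .all x F => .all x (F.subst (Function.update σ x (Tm.var x)))
  | .exi x F => .exi x (F.subst (Function.update σ x (Tm.var x)))

/-- Inverse application of an injective substitution to a term:
all rng(σ)-maximal occurrences of terms in the range of σ are replaced by
the corresponding domain variable. -/
noncomputable def Tm.inv (σ : Subst) : Tm → Tm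
  | .var x =>
      if h : ∃ v ∈ Subst.dom σ, σ v = Tm.var x then Tm.var h.choose else Tm.var x
  | .app f n ts =>
      if h : ∃ v ∈ Subst.dom σ, σ v = Tm.app f n ts then Tm.var h.choose
      else .app f n (fun i => Tm.inv σ (ts i))

/-- Inverse application of an injective substitution to a formula. -/
noncomputable def Fml.inv (σ : Subst) : Fml → Fml
  | .tru => .tru
  | .fls => .fls
  | .atom p n ts => .atom p n (fun i => Tm.inv σ (ts i))
  | .neg F => .neg (F.inv σ)
  | .conj F G => .conj (F.inv σ) (G.inv σ)
  | .disj F G => .disj (F.inv σ) (G.inv σ)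
  | .all x F => .all x (F.inv σ)
  | .exi x F => .exi x (F.inv σ)

/-- `H` is a Craig-Lyndon interpolant of `F` and `G`. -/
def CLInterp (F G H : Fml) : Prop :=
  entails F H ∧ entails H G ∧
  H.pred ⊆ F.pred ∩ G.pred ∧
  H.funs ⊆ F.funs ∩ G.funs ∧
  H.free ⊆ F.free ∩ G.free

/-- `H` is a Craig interpolant of `F` and `G` (no polarity constraint). -/
def CraigInterp (F G H : Fml) : Prop :=
  entails F H ∧ entails H G ∧
  H.predSyms ⊆ F.predSyms ∩ G.predSyms ∧
  H.funs ⊆ F.funs ∩ G.funs ∧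
  H.free ⊆ F.free ∩ G.free

/-- An S-term: a term whose outermost function symbol is in `S`. -/
def isSTerm (S : Set (ℕ × ℕ)) : Tm → Prop
  | .var _ => False
  | .app f n _ => (f, n) ∈ S

def STerms (S : Set (ℕ × ℕ)) : Set Tm := {t | isSTerm S t}

/-- `t` has a `T`-maximal occurrence in the given term: an occurrence that is
not within an occurrence of another member of `T`. -/
def Tm.hasMaxOcc (T : Set Tm) (t : Tm) : Tm → Prop
  | .var x => Tm.var x ∈ T ∧ t = Tm.var x
  | .app f n ts =>
      (Tm.app f n ts ∈ T ∧ t = Tm.app f n ts) ∨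
      (Tm.app f n ts ∉ T ∧ ∃ i, Tm.hasMaxOcc T t (ts i))

/-- `t` has a `T`-maximal occurrence in the formula. -/
def Fml.hasMaxOcc (T : Set Tm) (t : Tm) : Fml → Prop
  | .tru => False
  | .fls => False
  | .atom _ _ ts => ∃ i, Tm.hasMaxOcc T t (ts i)
  | .neg F => F.hasMaxOcc T t
  | .conj F G => F.hasMaxOcc T t ∨ G.hasMaxOcc T t
  | .disj F G => F.hasMaxOcc T t ∨ G.hasMaxOcc T t
  | .all _ F => F.hasMaxOcc T t
  | .exi _ F => F.hasMaxOcc T t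

/-- Universal quantification over a list of variables. -/
def alls (xs : List ℕ) (F : Fml) : Fml := xs.foldr Fml.all F

end CTIF
namespace CTIF

/-- `M'` agrees with `M` except possibly in the interpretation of the function
symbols (with arity) in `S`. -/
def agreeExcept {D : Type} (M M' : Struc D) (S : Set (ℕ × ℕ)) : Prop :=
  M'.pr = M.pr ∧ ∀ g n, (g, n) ∉ S → M'.fn g n = M.fn g n

/-- Interpolant lifting base ⟨F, G, 𝔽, 𝔾, H_grd, F_exp, G_exp, θ⟩
(Definition of "interpolant lifting base"). -/
def IsLiftBase (F G : Fml) (FS GS : Set (ℕ × ℕ)) (Hg Fe Ge : Fml) (θ : Subst) : Prop :=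
  F.isSentence ∧ G.isSentence ∧
  FS ∩ GS = ∅ ∧
  Hg.isGround ∧ Fe.isQF ∧ Ge.isQF ∧ Subst.isGround θ ∧
  -- (i)  F ⊨ ∃𝔽 ∀u F_exp, semantically via expansions:
  (∀ (D : Type), Nonempty D → ∀ M : Struc D, (∀ a, F.sat M a) →
    ∃ M' : Struc D, agreeExcept M M' FS ∧ ∀ a, Fe.sat M' a) ∧
  -- (i') ∀𝔾 ∃v G_exp ⊨ G, semantically via reinterpretations:
  (∀ (D : Type), Nonempty D → ∀ M : Struc D,
    (∀ M' : Struc D, agreeExcept M M' GS → ∃ a, Ge.sat M' a) → ∀ a, G.sat M a) ∧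
  -- (ii), (ii')
  Fe.pred ⊆ F.pred ∧ Ge.pred ⊆ G.pred ∧
  -- (iii), (iii')
  Fe.funs ⊆ (F.funs ∩ G.funs) ∪ FS ∧ Ge.funs ⊆ (F.funs ∩ G.funs) ∪ GS ∧
  -- (iv), (iv')
  F.funs ∩ GS = ∅ ∧ G.funs ∩ FS = ∅ ∧
  -- (v)
  Subst.dom θ = Fe.free ∪ Ge.free ∧
  -- (vi)
  (∃ c₀ : ℕ, (c₀, 0) ∈ FS ∪ GS ∧
    ∀ x ∈ Subst.dom θ, (θ x).funs ⊆ Fe.funs ∪ Ge.funs ∪ {(c₀, 0)}) ∧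
  -- (vii)
  CLInterp (Fe.subst θ) (Ge.subst θ) Hg

/-- The lifted formula Q₁v₁ … Qₙvₙ body, where Qᵢ = ∃ if tᵢ is an 𝔽-term
(its outermost symbol is in `FS`) and Qᵢ = ∀ otherwise. -/
noncomputable def lifted (n : ℕ) (v : Fin n → ℕ) (tl : Fin n → Tm)
    (FS : Set (ℕ × ℕ)) (body : Fml) : Fml :=
  (List.finRange n).foldr
    (fun i acc => if isSTerm FS (tl i) then Fml.exi (v i) acc else Fml.all (v i) acc)
    body

end CTIF
namespace CTIF

section LiftingAux

variable {D : Type}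

lemma tm_eval_congr (M : Struc D) (t : Tm) : ∀ a a' : ℕ → D,
    (∀ x ∈ t.vars, a x = a' x) → t.eval M a = t.eval M a' := by
  induction t with
  | var x =>
      intro a a' h
      exact h x (by simp [Tm.vars])
  | app f k ts ih =>
      intro a a' h
      simp only [Tm.eval]
      congr 1
      funext i
      exact ih i a a' (fun x hx => h x (by simp only [Tm.vars, Set.mem_iUnion]; exact ⟨i, hx⟩))

lemma fml_sat_congr (M : Struc D) (φ : Fml) : ∀ a a' : ℕ → D,
    (∀ x ∈ φ.free, a x = a' x) → (φ.sat M a ↔ φ.sat M a') := by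
  induction φ with
  | tru => intro a a' h; simp [Fml.sat]
  | fls => intro a a' h; simp [Fml.sat]
  | atom p k ts =>
      intro a a' h
      simp only [Fml.sat]
      have : (fun i => (ts i).eval M a) = fun i => (ts i).eval M a' := by
        funext i
        exact tm_eval_congr M (ts i) a a'
          (fun x hx => h x (by simp only [Fml.free, Set.mem_iUnion]; exact ⟨i, hx⟩))
      rw [this]
  | neg ψ ih =>
      intro a a' h
      simp only [Fml.sat]
      rw [ih a a' h]
  | conj ψ χ ih1 ih2 =>
      intro a a' h
      simp only [Fml.sat]
      rw [ih1 a a' (fun x hx => h x (Or.inl hx)), ih2 a a' (fun x hx => h x (Or.inr hx))]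
  | disj ψ χ ih1 ih2 =>
      intro a a' h
      simp only [Fml.sat]
      rw [ih1 a a' (fun x hx => h x (Or.inl hx)), ih2 a a' (fun x hx => h x (Or.inr hx))]
  | all x ψ ih =>
      intro a a' h
      simp only [Fml.sat]
      refine forall_congr' (fun e => ih _ _ (fun y hy => ?_))
      by_cases hyx : y = x
      · subst hyx; simp [Function.update]
      · rw [Function.update_of_ne hyx, Function.update_of_ne hyx]
        exact h y ⟨hy, hyx⟩
  | exi x ψ ih =>
      intro a a' h
      simp only [Fml.sat]
      refine exists_congr (fun e => ih _ _ (fun y hy => ?_))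
      by_cases hyx : y = x
      · subst hyx; simp [Function.update]
      · rw [Function.update_of_ne hyx, Function.update_of_ne hyx]
        exact h y ⟨hy, hyx⟩

lemma occursIn_self (t : Tm) : t.occursIn t := by
  cases t with
  | var x => simp [Tm.occursIn]
  | app f k ts => exact Or.inl rfl

lemma tm_maxocc_vars (T : Set Tm) (t : Tm) : ∀ s : Tm, Tm.hasMaxOcc T t s → t.vars ⊆ s.vars := by
  intro s
  induction s with
  | var x => rintro ⟨_, rfl⟩; exact subset_rfl
  | app f k ts ih =>
      rintro (⟨_, rfl⟩ | ⟨_, i, hi⟩)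
      · exact subset_rfl
      · exact (ih i hi).trans (Set.subset_iUnion (fun j => (ts j).vars) i)

lemma fml_maxocc_vars (T : Set Tm) (t : Tm) :
    ∀ φ : Fml, φ.isQF → φ.hasMaxOcc T t → t.vars ⊆ φ.free := by
  intro φ
  induction φ with
  | tru => intro _ h; exact absurd h id
  | fls => intro _ h; exact absurd h id
  | atom p k ts =>
      rintro _ ⟨i, hi⟩
      exact (tm_maxocc_vars T t (ts i) hi).trans (Set.subset_iUnion (fun j => (ts j).vars) i)
  | neg ψ ih => intro hqf h; exact ih hqf h
  | conj ψ χ ih1 ih2 =>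
      rintro ⟨h1, h2⟩ (h | h)
      · exact (ih1 h1 h).trans Set.subset_union_left
      · exact (ih2 h2 h).trans Set.subset_union_right
  | disj ψ χ ih1 ih2 =>
      rintro ⟨h1, h2⟩ (h | h)
      · exact (ih1 h1 h).trans Set.subset_union_left
      · exact (ih2 h2 h).trans Set.subset_union_right
  | all x ψ ih => intro hqf; exact absurd hqf id
  | exi x ψ ih => intro hqf; exact absurd hqf id

lemma eval_subst (M : Struc D) (τ : Subst) (t : Tm) :
    ∀ a : ℕ → D, (t.subst τ).eval M a = t.eval M (fun x => (τ x).eval M a) := by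
  induction t with
  | var x => intro a; rfl
  | app f k ts ih =>
      intro a
      simp only [Tm.subst, Tm.eval]
      congr 1
      funext i
      exact ih i a

lemma sat_subst_qf (M : Struc D) (τ : Subst) (φ : Fml) (hqf : φ.isQF) :
    ∀ a : ℕ → D, ((φ.subst τ).sat M a ↔ φ.sat M (fun x => (τ x).eval M a)) := by
  induction φ with
  | tru => intro a; simp [Fml.subst, Fml.sat]
  | fls => intro a; simp [Fml.subst, Fml.sat]
  | atom p k ts =>
      intro a
      simp only [Fml.subst, Fml.sat]
      have : (fun i => ((ts i).subst τ).eval M a) = fun i => (ts i).eval M (fun x => (τ x).eval M a) := by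
        funext i; exact eval_subst M τ (ts i) a
      rw [this]
  | neg ψ ih => intro a; simp only [Fml.subst, Fml.sat]; rw [ih hqf a]
  | conj ψ χ ih1 ih2 =>
      intro a; simp only [Fml.subst, Fml.sat]; rw [ih1 hqf.1 a, ih2 hqf.2 a]
  | disj ψ χ ih1 ih2 =>
      intro a; simp only [Fml.subst, Fml.sat]; rw [ih1 hqf.1 a, ih2 hqf.2 a]
  | all x ψ ih => exact absurd hqf id
  | exi x ψ ih => exact absurd hqf id

lemma eval_agree (M M' : Struc D) (S : Set (ℕ × ℕ)) (hag : agreeExcept M M' S) (t : Tm)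
    (ht : ∀ p ∈ t.funs, p ∉ S) : ∀ c : ℕ → D, t.eval M' c = t.eval M c := by
  induction t with
  | var x => intro c; rfl
  | app f k ts ih =>
      intro c
      simp only [Tm.eval]
      rw [hag.2 f k (ht (f, k) (by simp [Tm.funs]))]
      congr 1
      funext i
      exact ih i (fun p hp => ht p (by simp only [Tm.funs, Set.mem_insert_iff, Set.mem_iUnion]
                                       exact Or.inr ⟨i, hp⟩)) c

lemma sat_agree (M M' : Struc D) (S : Set (ℕ × ℕ)) (hag : agreeExcept M M' S) (φ : Fml)
    (hφ : ∀ p ∈ φ.funs, p ∉ S) : ∀ c : ℕ → D, (φ.sat M' c ↔ φ.sat M c) := by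
  induction φ with
  | tru => intro c; simp [Fml.sat]
  | fls => intro c; simp [Fml.sat]
  | atom p k ts =>
      intro c
      simp only [Fml.sat]
      rw [hag.1]
      have : (fun i => (ts i).eval M' c) = fun i => (ts i).eval M c := by
        funext i
        exact eval_agree M M' S hag (ts i)
          (fun p hp => hφ p (by simp only [Fml.funs, Set.mem_iUnion]; exact ⟨i, hp⟩)) c
      rw [this]
  | neg ψ ih => intro c; simp only [Fml.sat]; rw [ih hφ c]
  | conj ψ χ ih1 ih2 =>
      intro c; simp only [Fml.sat]
      rw [ih1 (fun p hp => hφ p (Or.inl hp)) c, ih2 (fun p hp => hφ p (Or.inr hp)) c]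
  | disj ψ χ ih1 ih2 =>
      intro c; simp only [Fml.sat]
      rw [ih1 (fun p hp => hφ p (Or.inl hp)) c, ih2 (fun p hp => hφ p (Or.inr hp)) c]
  | all x ψ ih =>
      intro c; simp only [Fml.sat]
      exact forall_congr' (fun e => ih hφ _)
  | exi x ψ ih =>
      intro c; simp only [Fml.sat]
      exact exists_congr (fun e => ih hφ _)

end LiftingAux
section LiftingCore

variable {D : Type}

/-- Target evaluation of ground terms: GS-terms in the list get the externally
supplied value `d j` and a fresh variable tag; other terms evaluate via `M`
with a syntactic tag in the second component. -/
noncomputable def nu (M : Struc D) (a0 : ℕ → D) {n : ℕ} (tl : Fin n → Tm)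
    (FS : Set (ℕ × ℕ)) (d : Fin n → D) : Tm → D × Tm
  | .var x => (a0 x, .var x)
  | .app f k ts =>
      if h : ∃ j : Fin n, ¬ isSTerm FS (tl j) ∧ tl j = .app f k ts then
        (d h.choose, .var (h.choose : ℕ))
      else
        (M.fn f k (fun i => (nu M a0 tl FS d (ts i)).1),
         .app f k (fun i => (nu M a0 tl FS d (ts i)).2))

/-- The realizing structure on the tagged domain `D × Tm`. -/
noncomputable def NS (M : Struc D) (a0 : ℕ → D) {n : ℕ} (tl : Fin n → Tm)
    (FS : Set (ℕ × ℕ)) (d : Fin n → D) : Struc (D × Tm) where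
  fn f k x :=
    if h : ∃ j : Fin n, ¬ isSTerm FS (tl j) ∧
        ∃ ss : Fin k → Tm, tl j = .app f k ss ∧ x = fun i => nu M a0 tl FS d (ss i) then
      (d h.choose, .var (h.choose : ℕ))
    else
      (M.fn f k (fun i => (x i).1), .app f k (fun i => (x i).2))
  pr p k x := M.pr p k (fun i => (x i).1)

lemma ground_app_arg {f k ts} (h : (Tm.app f k ts).vars = ∅) (i : Fin k) : (ts i).vars = ∅ := by
  have : (⋃ i, (ts i).vars) = ∅ := h
  exact (Set.iUnion_eq_empty.mp this) i

/-- Tags of the target evaluation are injective on ground terms. -/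
lemma nu_snd_inj (M : Struc D) (a0 : ℕ → D) {n : ℕ} (tl : Fin n → Tm)
    (FS : Set (ℕ × ℕ)) (d : Fin n → D) :
    ∀ s : Tm, s.vars = ∅ → ∀ t : Tm, t.vars = ∅ →
      (nu M a0 tl FS d s).2 = (nu M a0 tl FS d t).2 → s = t := by
  intro s
  induction s with
  | var x => intro hs; exact absurd hs (by simp [Tm.vars])
  | app f k ts ih =>
      intro hs t
      cases t with
      | var y => intro ht; exact absurd ht (by simp [Tm.vars])
      | app f' k' ts' =>
          intro ht heq
          by_cases h1 : ∃ j : Fin n, ¬ isSTerm FS (tl j) ∧ tl j = .app f k ts <;>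
            by_cases h2 : ∃ j : Fin n, ¬ isSTerm FS (tl j) ∧ tl j = .app f' k' ts'
          · rw [nu, dif_pos h1, nu, dif_pos h2] at heq
            have hj : (h1.choose : ℕ) = (h2.choose : ℕ) := by
              simpa using heq
            have hj' : h1.choose = h2.choose := Fin.val_injective hj
            rw [← h1.choose_spec.2, ← h2.choose_spec.2, hj']
          · rw [nu, dif_pos h1, nu, dif_neg h2] at heq
            exact absurd heq (by simp)
          · rw [nu, dif_neg h1, nu, dif_pos h2] at heq
            exact absurd heq (by simp)
          · rw [nu, dif_neg h1, nu, dif_neg h2] at heq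
            simp only [Tm.app.injEq] at heq
            obtain ⟨rfl, rfl, h3⟩ := heq
            have h3' : (fun i => (nu M a0 tl FS d (ts i)).2) =
                fun i => (nu M a0 tl FS d (ts' i)).2 := eq_of_heq h3
            have : ts = ts' := by
              funext i
              exact ih i (ground_app_arg hs i) (ts' i) (ground_app_arg ht i) (congrFun h3' i)
            rw [this]

/-- Uniqueness of the chosen index. -/
lemma choose_tl_eq {n : ℕ} {tl : Fin n → Tm} (htl_inj : Function.Injective tl)
    {FS : Set (ℕ × ℕ)} {s : Tm} (h : ∃ j : Fin n, ¬ isSTerm FS (tl j) ∧ tl j = s)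
    {j : Fin n} (hj : tl j = s) : h.choose = j := by
  exact htl_inj (h.choose_spec.2.trans hj.symm)

/-- Evaluation in the realizing structure computes the target evaluation on
ground terms. -/
lemma eval_NS (M : Struc D) (a0 : ℕ → D) {n : ℕ} (tl : Fin n → Tm)
    (FS : Set (ℕ × ℕ)) (d : Fin n → D) (htl_inj : Function.Injective tl)
    (hground : ∀ j, (tl j).vars = ∅) :
    ∀ s : Tm, s.vars = ∅ → ∀ b : ℕ → D × Tm,
      Tm.eval (NS M a0 tl FS d) b s = nu M a0 tl FS d s := by
  intro s
  induction s with
  | var x => intro hs; exact absurd hs (by simp [Tm.vars])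
  | app f k ts ih =>
      intro hs b
      have hargs : (fun i => Tm.eval (NS M a0 tl FS d) b (ts i)) =
          fun i => nu M a0 tl FS d (ts i) := by
        funext i; exact ih i (ground_app_arg hs i) b
      show (NS M a0 tl FS d).fn f k (fun i => Tm.eval (NS M a0 tl FS d) b (ts i)) = _
      rw [hargs]
      by_cases hnu : ∃ j : Fin n, ¬ isSTerm FS (tl j) ∧ tl j = .app f k ts
      · have hNS : ∃ j : Fin n, ¬ isSTerm FS (tl j) ∧
            ∃ ss : Fin k → Tm, tl j = .app f k ss ∧
              (fun i => nu M a0 tl FS d (ts i)) = fun i => nu M a0 tl FS d (ss i) := by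
          obtain ⟨j, hU, hj⟩ := hnu
          exact ⟨j, hU, ts, hj, rfl⟩
        show dite _ _ _ = _
        rw [dif_pos hNS, nu, dif_pos hnu]
        obtain ⟨hU1, ss, hj1, heq1⟩ := hNS.choose_spec
        have hss : ss = ts := by
          funext i
          refine nu_snd_inj M a0 tl FS d (ss i) ?_ (ts i) (ground_app_arg hs i) ?_
          · exact ground_app_arg (by rw [← hj1]; exact hground _) i
          · exact (congrArg Prod.snd (congrFun heq1 i)).symm
        have : hNS.choose = hnu.choose := by
          have h1 : tl hNS.choose = Tm.app f k ts := by rw [hj1, hss]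
          have h2 : tl hnu.choose = Tm.app f k ts := hnu.choose_spec.2
          exact htl_inj (h1.trans h2.symm)
        rw [this]
      · have hNS : ¬ ∃ j : Fin n, ¬ isSTerm FS (tl j) ∧
            ∃ ss : Fin k → Tm, tl j = .app f k ss ∧
              (fun i => nu M a0 tl FS d (ts i)) = fun i => nu M a0 tl FS d (ss i) := by
          rintro ⟨j, hU, ss, hj, heq⟩
          refine hnu ⟨j, hU, ?_⟩
          have hss : ss = ts := by
            funext i
            refine nu_snd_inj M a0 tl FS d (ss i) ?_ (ts i) (ground_app_arg hs i) ?_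
            · exact ground_app_arg (by rw [← hj]; exact hground _) i
            · exact (congrArg Prod.snd (congrFun heq i)).symm
          rw [hj, hss]
        show dite _ _ _ = _
        rw [dif_neg hNS, nu, dif_neg hnu]

/-- The target evaluation only depends on the external values at indices whose
terms occur in the evaluated term. -/
lemma nu_congr_d (M : Struc D) (a0 : ℕ → D) {n : ℕ} (tl : Fin n → Tm)
    (FS : Set (ℕ × ℕ)) (d d' : Fin n → D) :
    ∀ s : Tm, (∀ j, ¬ isSTerm FS (tl j) → (tl j).occursIn s → d j = d' j) →
      nu M a0 tl FS d s = nu M a0 tl FS d' s := by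
  intro s
  induction s with
  | var x => intro _; rfl
  | app f k ts ih =>
      intro h
      by_cases h1 : ∃ j : Fin n, ¬ isSTerm FS (tl j) ∧ tl j = .app f k ts
      · rw [nu, dif_pos h1, nu, dif_pos h1]
        have := h1.choose_spec
        rw [h (h1.choose) this.1 (by rw [this.2]; exact occursIn_self _)]
      · rw [nu, dif_neg h1, nu, dif_neg h1]
        have hargs1 : (fun i => (nu M a0 tl FS d (ts i)).1) =
            fun i => (nu M a0 tl FS d' (ts i)).1 := by
          funext i
          rw [ih i (fun j hj ho => h j hj (Or.inr ⟨i, ho⟩))]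
        have hargs2 : (fun i => (nu M a0 tl FS d (ts i)).2) =
            fun i => (nu M a0 tl FS d' (ts i)).2 := by
          funext i
          rw [ih i (fun j hj ho => h j hj (Or.inr ⟨i, ho⟩))]
        rw [hargs1, hargs2]

end LiftingCore
section LiftingTransfer

variable {D : Type}

lemma fst_update (b : ℕ → D × Tm) (x : ℕ) (dt : D × Tm) :
    (fun y => ((Function.update b x dt) y).1) = Function.update (fun y => (b y).1) x dt.1 := by
  funext y
  by_cases h : y = x
  · subst h; simp
  · rw [Function.update_of_ne h, Function.update_of_ne h]

lemma evalNS_fst (M : Struc D) (a0 : ℕ → D) {n : ℕ} (tl : Fin n → Tm)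
    (FS GS : Set (ℕ × ℕ)) (d : Fin n → D)
    (hUtoGS : ∀ j, ¬ isSTerm FS (tl j) → isSTerm GS (tl j)) :
    ∀ t : Tm, (∀ p ∈ t.funs, p ∉ GS) → ∀ b : ℕ → D × Tm,
      (Tm.eval (NS M a0 tl FS d) b t).1 = Tm.eval M (fun x => (b x).1) t := by
  intro t
  induction t with
  | var x => intro _ b; rfl
  | app f k ts ih =>
      intro ht b
      have hfk : (f, k) ∉ GS := ht (f, k) (by simp [Tm.funs])
      show ((NS M a0 tl FS d).fn f k (fun i => Tm.eval (NS M a0 tl FS d) b (ts i))).1 = _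
      have hno : ¬ ∃ j : Fin n, ¬ isSTerm FS (tl j) ∧
          ∃ ss : Fin k → Tm, tl j = .app f k ss ∧
            (fun i => Tm.eval (NS M a0 tl FS d) b (ts i)) = fun i => nu M a0 tl FS d (ss i) := by
        rintro ⟨j, hU, ss, hj, _⟩
        have := hUtoGS j hU
        rw [hj] at this
        exact hfk this
      show (dite _ _ _ : D × Tm).1 = _
      rw [dif_neg hno]
      simp only [Tm.eval]
      congr 1
      funext i
      exact ih i (fun p hp => ht p (by simp only [Tm.funs, Set.mem_insert_iff, Set.mem_iUnion]
                                       exact Or.inr ⟨i, hp⟩)) b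

lemma satNS_fst (M : Struc D) (a0 : ℕ → D) {n : ℕ} (tl : Fin n → Tm)
    (FS GS : Set (ℕ × ℕ)) (d : Fin n → D)
    (hUtoGS : ∀ j, ¬ isSTerm FS (tl j) → isSTerm GS (tl j)) :
    ∀ φ : Fml, (∀ p ∈ φ.funs, p ∉ GS) → ∀ b : ℕ → D × Tm,
      (φ.sat (NS M a0 tl FS d) b ↔ φ.sat M (fun x => (b x).1)) := by
  intro φ
  induction φ with
  | tru => intro _ b; simp [Fml.sat]
  | fls => intro _ b; simp [Fml.sat]
  | atom p k ts =>
      intro hφ b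
      show M.pr p k _ ↔ M.pr p k _
      have : (fun i => (Tm.eval (NS M a0 tl FS d) b (ts i)).1) =
          fun i => Tm.eval M (fun x => (b x).1) (ts i) := by
        funext i
        exact evalNS_fst M a0 tl FS GS d hUtoGS (ts i)
          (fun p hp => hφ p (by simp only [Fml.funs, Set.mem_iUnion]; exact ⟨i, hp⟩)) b
      rw [this]
  | neg ψ ih => intro hφ b; simp only [Fml.sat]; rw [ih hφ b]
  | conj ψ χ ih1 ih2 =>
      intro hφ b; simp only [Fml.sat]
      rw [ih1 (fun p hp => hφ p (Or.inl hp)) b, ih2 (fun p hp => hφ p (Or.inr hp)) b]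
  | disj ψ χ ih1 ih2 =>
      intro hφ b; simp only [Fml.sat]
      rw [ih1 (fun p hp => hφ p (Or.inl hp)) b, ih2 (fun p hp => hφ p (Or.inr hp)) b]
  | all x ψ ih =>
      intro hφ b
      simp only [Fml.sat]
      constructor
      · intro h e
        have := (ih hφ (Function.update b x (e, Tm.var 0))).mp (h (e, Tm.var 0))
        rwa [fst_update] at this
      · intro h dt
        refine (ih hφ (Function.update b x dt)).mpr ?_
        rw [fst_update]
        exact h dt.1
  | exi x ψ ih =>
      intro hφ b
      simp only [Fml.sat]
      constructor
      · rintro ⟨dt, h⟩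
        refine ⟨dt.1, ?_⟩
        have := (ih hφ (Function.update b x dt)).mp h
        rwa [fst_update] at this
      · rintro ⟨e, h⟩
        refine ⟨(e, Tm.var 0), (ih hφ (Function.update b x (e, Tm.var 0))).mpr ?_⟩
        rw [fst_update]
        exact h

/-- Function symbols of the inverse-substituted term avoid `FSGS`. -/
lemma inv_tm_funs (σ : Subst) (FSGS : Set (ℕ × ℕ)) :
    ∀ s : Tm,
      (∀ t, isSTerm FSGS t → Tm.hasMaxOcc (STerms FSGS) t s → ∃ z ∈ Subst.dom σ, σ z = t) →
      ∀ p ∈ (Tm.inv σ s).funs, p ∉ FSGS := by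
  intro s
  induction s with
  | var x =>
      intro _ p hp
      rw [Tm.inv] at hp
      split at hp <;> exact absurd hp (by simp [Tm.funs])
  | app f k ts ih =>
      intro hmax p hp
      rw [Tm.inv] at hp
      split at hp
      · exact absurd hp (by simp [Tm.funs])
      · next hno =>
          have hfk : (f, k) ∉ FSGS := by
            intro hmem
            have hS : isSTerm FSGS (Tm.app f k ts) := hmem
            obtain ⟨z, hz, hze⟩ := hmax _ hS (Or.inl ⟨hS, rfl⟩)
            exact hno ⟨z, hz, hze⟩
          simp only [Tm.funs, Set.mem_insert_iff, Set.mem_iUnion] at hp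
          rcases hp with rfl | ⟨i, hi⟩
          · exact hfk
          · refine ih i (fun t hS hocc => hmax t hS ?_) p hi
            exact Or.inr ⟨fun hmem => hfk hmem, i, hocc⟩

lemma inv_fml_funs (σ : Subst) (FSGS : Set (ℕ × ℕ)) :
    ∀ φ : Fml,
      (∀ t, isSTerm FSGS t → Fml.hasMaxOcc (STerms FSGS) t φ → ∃ z ∈ Subst.dom σ, σ z = t) →
      ∀ p ∈ (Fml.inv σ φ).funs, p ∉ FSGS := by
  intro φ
  induction φ with
  | tru => intro _ p hp; exact absurd hp (by simp [Fml.inv, Fml.funs])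
  | fls => intro _ p hp; exact absurd hp (by simp [Fml.inv, Fml.funs])
  | atom q k ts =>
      intro hmax p hp
      simp only [Fml.inv, Fml.funs, Set.mem_iUnion] at hp
      obtain ⟨i, hi⟩ := hp
      exact inv_tm_funs σ FSGS (ts i) (fun t hS hocc => hmax t hS ⟨i, hocc⟩) p hi
  | neg ψ ih => intro hmax; exact ih hmax
  | conj ψ χ ih1 ih2 =>
      intro hmax p hp
      rcases hp with hp | hp
      · exact ih1 (fun t hS ho => hmax t hS (Or.inl ho)) p hp
      · exact ih2 (fun t hS ho => hmax t hS (Or.inr ho)) p hp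
  | disj ψ χ ih1 ih2 =>
      intro hmax p hp
      rcases hp with hp | hp
      · exact ih1 (fun t hS ho => hmax t hS (Or.inl ho)) p hp
      · exact ih2 (fun t hS ho => hmax t hS (Or.inr ho)) p hp
  | all x ψ ih => intro hmax; exact ih hmax
  | exi x ψ ih => intro hmax; exact ih hmax

end LiftingTransfer
section LiftingGamma

variable {D : Type}

/-- The assignment giving each lifted variable the target value of its term. -/
noncomputable def gma (M : Struc D) (a0 : ℕ → D) {n : ℕ} (tl : Fin n → Tm)
    (FS : Set (ℕ × ℕ)) (d : Fin n → D) (v : Fin n → ℕ) : ℕ → D × Tm :=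
  fun x => if h : ∃ i : Fin n, v i = x then nu M a0 tl FS d (tl h.choose)
           else (a0 x, Tm.var x)

lemma inv_eval (M : Struc D) (a0 : ℕ → D) {n : ℕ} (tl : Fin n → Tm)
    (FS : Set (ℕ × ℕ)) (d : Fin n → D) (v : Fin n → ℕ) (σ : Subst)
    (_htl_inj : Function.Injective tl)
    (hground : ∀ j, (tl j).vars = ∅)
    (hσ : ∀ i, σ (v i) = tl i)
    (hσ' : ∀ x : ℕ, (∀ i, v i ≠ x) → σ x = Tm.var x) :
    ∀ s : Tm, s.vars = ∅ →
      Tm.eval (NS M a0 tl FS d) (gma M a0 tl FS d v) (Tm.inv σ s) = nu M a0 tl FS d s := by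
  intro s
  induction s with
  | var x => intro hs; exact absurd hs (by simp [Tm.vars])
  | app f k ts ih =>
      intro hs
      by_cases h : ∃ z ∈ Subst.dom σ, σ z = Tm.app f k ts
      · rw [Tm.inv, dif_pos h]
        have hspec := h.choose_spec
        show gma M a0 tl FS d v h.choose = _
        have hex : ∃ i : Fin n, v i = h.choose := by
          by_contra hc
          push_neg at hc
          have := hσ' h.choose hc
          exact hspec.1 this
        rw [gma, dif_pos hex]
        have hj : tl hex.choose = Tm.app f k ts := by
          rw [← hσ hex.choose, hex.choose_spec, hspec.2]
        rw [hj]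
      · have hnu : ¬ ∃ j : Fin n, ¬ isSTerm FS (tl j) ∧ tl j = Tm.app f k ts := by
          rintro ⟨j, _, hj⟩
          refine h ⟨v j, ?_, by rw [hσ j, hj]⟩
          show σ (v j) ≠ Tm.var (v j)
          rw [hσ j, hj]
          exact fun hc => Tm.noConfusion hc
        rw [Tm.inv, dif_neg h]
        have hargs : (fun i => Tm.eval (NS M a0 tl FS d) (gma M a0 tl FS d v) (Tm.inv σ (ts i))) =
            fun i => nu M a0 tl FS d (ts i) := by
          funext i; exact ih i (ground_app_arg hs i)
        show (NS M a0 tl FS d).fn f k _ = _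
        rw [hargs]
        have hNS : ¬ ∃ j : Fin n, ¬ isSTerm FS (tl j) ∧
            ∃ ss : Fin k → Tm, tl j = .app f k ss ∧
              (fun i => nu M a0 tl FS d (ts i)) = fun i => nu M a0 tl FS d (ss i) := by
          rintro ⟨j, hU, ss, hj, heq⟩
          have hss : ss = ts := by
            funext i
            refine nu_snd_inj M a0 tl FS d (ss i) ?_ (ts i) (ground_app_arg hs i) ?_
            · exact ground_app_arg (by rw [← hj]; exact hground _) i
            · exact (congrArg Prod.snd (congrFun heq i)).symm
          exact hnu ⟨j, hU, by rw [hj, hss]⟩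
        show dite _ _ _ = _
        rw [dif_neg hNS, nu, dif_neg hnu]

/-- Satisfaction of the inverse-substituted formula, given the term-level
correspondence. -/
lemma inv_sat {E : Type} (W : Struc E) (σ : Subst) (γ b0 : ℕ → E)
    (hterm : ∀ s : Tm, s.vars = ∅ → Tm.eval W γ (Tm.inv σ s) = Tm.eval W b0 s) :
    ∀ φ : Fml, φ.isQF → φ.free = ∅ → ((Fml.inv σ φ).sat W γ ↔ φ.sat W b0) := by
  intro φ
  induction φ with
  | tru => intro _ _; simp [Fml.inv, Fml.sat]
  | fls => intro _ _; simp [Fml.inv, Fml.sat]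
  | atom p k ts =>
      intro _ hfree
      show W.pr p k _ ↔ W.pr p k _
      have hg : ∀ i, (ts i).vars = ∅ := by
        intro i
        have : (⋃ i, (ts i).vars) = ∅ := hfree
        exact Set.iUnion_eq_empty.mp this i
      have : (fun i => Tm.eval W γ (Tm.inv σ (ts i))) = fun i => Tm.eval W b0 (ts i) := by
        funext i; exact hterm (ts i) (hg i)
      rw [this]
  | neg ψ ih =>
      intro hqf hfree
      show ¬ _ ↔ ¬ _
      rw [ih hqf hfree]
  | conj ψ χ ih1 ih2 =>
      intro hqf hfree
      simp only [Fml.free, Set.union_empty_iff] at hfree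
      show _ ∧ _ ↔ _ ∧ _
      rw [ih1 hqf.1 hfree.1, ih2 hqf.2 hfree.2]
  | disj ψ χ ih1 ih2 =>
      intro hqf hfree
      simp only [Fml.free, Set.union_empty_iff] at hfree
      show _ ∨ _ ↔ _ ∨ _
      rw [ih1 hqf.1 hfree.1, ih2 hqf.2 hfree.2]
  | all x ψ ih => intro hqf _; exact absurd hqf id
  | exi x ψ ih => intro hqf _; exact absurd hqf id

/-- Values of the lifted quantifiers. -/
noncomputable def liftVal (M : Struc D) (a0 : ℕ → D) {n : ℕ} (tl : Fin n → Tm)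
    (FS : Set (ℕ × ℕ)) (dd : Fin n → D) (i : Fin n) : D :=
  if isSTerm FS (tl i) then (nu M a0 tl FS dd (tl i)).1 else dd i

/-- The assignment after processing the first `k` quantifiers. -/
noncomputable def liftA (M : Struc D) (a : ℕ → D) {n : ℕ} (tl : Fin n → Tm)
    (FS : Set (ℕ × ℕ)) (v : Fin n → ℕ) (dd : Fin n → D) (k : ℕ) : ℕ → D :=
  fun x => if h : ∃ i : Fin n, (i : ℕ) < k ∧ v i = x then liftVal M a tl FS dd h.choose
           else a x

lemma liftA_mem (M : Struc D) (a : ℕ → D) {n : ℕ} (tl : Fin n → Tm)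
    (FS : Set (ℕ × ℕ)) (v : Fin n → ℕ) (hv : Function.Injective v)
    (dd : Fin n → D) (k : ℕ) (i : Fin n) (hik : (i : ℕ) < k) :
    liftA M a tl FS v dd k (v i) = liftVal M a tl FS dd i := by
  have h : ∃ j : Fin n, (j : ℕ) < k ∧ v j = v i := ⟨i, hik, rfl⟩
  rw [liftA, dif_pos h]
  rw [hv h.choose_spec.2]

lemma liftA_nonmem (M : Struc D) (a : ℕ → D) {n : ℕ} (tl : Fin n → Tm)
    (FS : Set (ℕ × ℕ)) (v : Fin n → ℕ) (dd : Fin n → D) (k : ℕ) (x : ℕ)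
    (hx : ∀ i : Fin n, (i : ℕ) < k → v i ≠ x) :
    liftA M a tl FS v dd k x = a x := by
  rw [liftA, dif_neg]
  rintro ⟨i, hik, hvi⟩
  exact hx i hik hvi

lemma liftVal_congr (M : Struc D) (a0 : ℕ → D) {n : ℕ} (tl : Fin n → Tm)
    (FS : Set (ℕ × ℕ)) (dd dd' : Fin n → D) (i : Fin n)
    (h : ∀ j, ¬ isSTerm FS (tl j) → (tl j).occursIn (tl i) → dd j = dd' j)
    (h2 : ¬ isSTerm FS (tl i) → dd i = dd' i) :
    liftVal M a0 tl FS dd i = liftVal M a0 tl FS dd' i := by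
  rw [liftVal, liftVal]
  by_cases hFS : isSTerm FS (tl i)
  · rw [if_pos hFS, if_pos hFS, nu_congr_d M a0 tl FS dd dd' (tl i) h]
  · rw [if_neg hFS, if_neg hFS]
    exact h2 hFS

end LiftingGamma
section LiftingMain

variable {D : Type}

lemma lifting_core (M M' : Struc D) (FS GS : Set (ℕ × ℕ)) (Hg Fe : Fml) (θ σ : Subst)
    {n : ℕ} (tl : Fin n → Tm) (v : Fin n → ℕ) (a : ℕ → D)
    (hag : agreeExcept M M' FS)
    (hFe : ∀ b, Fe.sat M' b)
    (hFeQF : Fe.isQF)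
    (hFeGS : ∀ p ∈ Fe.funs, p ∉ GS)
    (hEnt : entails (Fe.subst θ) Hg)
    (hHgQF : Hg.isQF) (hHgfree : Hg.free = ∅)
    (htl_inj : Function.Injective tl)
    (hground : ∀ j, (tl j).vars = ∅)
    (hUtoGS : ∀ j, ¬ isSTerm FS (tl j) → isSTerm GS (tl j))
    (hv : Function.Injective v)
    (hσ : ∀ i, σ (v i) = tl i)
    (hσ' : ∀ x : ℕ, (∀ i, v i ≠ x) → σ x = Tm.var x)
    (hHinv : ∀ p ∈ (Fml.inv σ Hg).funs, p ∉ FS ∪ GS)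
    (dd : Fin n → D) :
    (Fml.inv σ Hg).sat M (liftA M' a tl FS v dd n) := by
  set W := NS M' a tl FS dd with hW
  -- the expanded formula holds in the tagged structure under every assignment
  have hNSFe : ∀ b, Fe.sat W b := by
    intro b
    exact (satNS_fst M' a tl FS GS dd hUtoGS Fe hFeGS b).mpr (hFe _)
  -- hence its ground instance does
  have hFeθ : (Fe.subst θ).sat W (fun x => (a x, Tm.var x)) :=
    (sat_subst_qf W θ Fe hFeQF _).mpr (hNSFe _)
  -- hence the ground interpolant does
  have hHgNS : Hg.sat W (fun x => (a x, Tm.var x)) :=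
    hEnt (D × Tm) ⟨(a 0, Tm.var 0)⟩ W _ hFeθ
  -- hence the lifted interpolant under γ
  have hInv : (Fml.inv σ Hg).sat W (gma M' a tl FS dd v) := by
    refine (inv_sat W σ _ _ ?_ Hg hHgQF hHgfree).mpr hHgNS
    intro s hs
    rw [inv_eval M' a tl FS dd v σ htl_inj hground hσ hσ' s hs,
      eval_NS M' a tl FS dd htl_inj hground s hs]
  -- project down to M'
  have h1 : (Fml.inv σ Hg).sat M' (fun x => ((gma M' a tl FS dd v) x).1) :=
    (satNS_fst M' a tl FS GS dd hUtoGS (Fml.inv σ Hg)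
      (fun p hp hpGS => hHinv p hp (Or.inr hpGS)) _).mp hInv
  -- and to M
  have h2 : (Fml.inv σ Hg).sat M (fun x => ((gma M' a tl FS dd v) x).1) :=
    (sat_agree M M' FS hag (Fml.inv σ Hg)
      (fun p hp hpFS => hHinv p hp (Or.inl hpFS)) _).mp h1
  have heq : (fun x => ((gma M' a tl FS dd v) x).1) = liftA M' a tl FS v dd n := by
    funext x
    by_cases h : ∃ i : Fin n, v i = x
    · obtain ⟨i, rfl⟩ := h
      have hgem : ∃ j : Fin n, v j = v i := ⟨i, rfl⟩
      rw [gma, dif_pos hgem, hv hgem.choose_spec]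
      rw [liftA_mem M' a tl FS v hv dd n i i.isLt]
      rw [liftVal]
      by_cases hFS : isSTerm FS (tl i)
      · rw [if_pos hFS]
      · rw [if_neg hFS]
        have hnu : ∃ j : Fin n, ¬ isSTerm FS (tl j) ∧ tl j = tl i := ⟨i, hFS, rfl⟩
        obtain ⟨f, k, ts, hts⟩ : ∃ f k ts, tl i = Tm.app f k ts := by
          cases hti : tl i with
          | var y =>
              exfalso
              have := hUtoGS i hFS
              rw [hti] at this
              exact this
          | app f k ts => exact ⟨f, k, ts, rfl⟩
        rw [hts] at hnu ⊢
        rw [nu, dif_pos hnu]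
        have : hnu.choose = i := htl_inj (hnu.choose_spec.2.trans hts.symm)
        rw [this]
    · push_neg at h
      rw [gma, dif_neg (by rintro ⟨i, hi⟩; exact h i hi)]
      rw [liftA_nonmem M' a tl FS v dd n x (fun i _ => h i)]
  rwa [heq] at h2

end LiftingMain
/-- Interpolant lifting: given the first five components F, G, 𝔽, 𝔾, H_grd of an
interpolant lifting base (whose remaining components F_exp, G_exp, θ exist), let
t₁,…,tₙ be the 𝔽𝔾-terms with an 𝔽𝔾-terms-maximal occurrence in H_grd, listed so
that strict subterms come first, let v₁,…,vₙ be fresh (distinct) variables, let σ be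
the injective substitution vᵢ ↦ tᵢ, and let Qᵢ = ∃ if tᵢ is an 𝔽-term and Qᵢ = ∀ if
it is a 𝔾-term.  Conclusion: Q₁v₁ … Qₙvₙ H_grd⁻σ relates to F and G as stated. -/
theorem statement13 (F G : Fml) (FS GS : Set (ℕ × ℕ)) (Hg Fe Ge : Fml) (θ : Subst)
    (hbase : IsLiftBase F G FS GS Hg Fe Ge θ)
    (n : ℕ) (tl : Fin n → Tm)
    (htl_inj : Function.Injective tl)
    (htl_range : ∀ t : Tm, (∃ i, tl i = t) ↔
      (isSTerm (FS ∪ GS) t ∧ Fml.hasMaxOcc (STerms (FS ∪ GS)) t Hg))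
    (horder : ∀ i j, Tm.strictSub (tl i) (tl j) → i < j)
    (v : Fin n → ℕ) (hv : Function.Injective v)
    (σ : Subst)
    (hσ : ∀ i, σ (v i) = tl i)
    (hσ' : ∀ x : ℕ, (∀ i, v i ≠ x) → σ x = Tm.var x) :
    entails F (lifted n v tl FS (Fml.inv σ Hg)) := by
  intro D hD M a hFa
  obtain ⟨e0⟩ := hD
  obtain ⟨hFsen, hGsen, hFG, hHgG, hFeQF, hGeQF, hθg, hi, hi', hp1, hp2, hf1, hf2,
    hFGS, hGFS, hdom, hc0, hCL⟩ := hbase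
  obtain ⟨hHgQF, hHgfree⟩ := hHgG
  obtain ⟨hEnt, -, -, -, -⟩ := hCL
  have hFfree : F.free = ∅ := hFsen
  have hFall : ∀ a' : ℕ → D, F.sat M a' := by
    intro a'
    refine (fml_sat_congr M F a a' ?_).mp hFa
    intro x hx
    rw [hFfree] at hx
    exact absurd hx (Set.notMem_empty x)
  obtain ⟨M', hag, hFe⟩ := hi D ⟨e0⟩ M hFall
  have hT : ∀ i, isSTerm (FS ∪ GS) (tl i) ∧ Fml.hasMaxOcc (STerms (FS ∪ GS)) (tl i) Hg :=
    fun i => (htl_range (tl i)).mp ⟨i, rfl⟩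
  have htl_app : ∀ i, ∃ f k ts, tl i = Tm.app f k ts := by
    intro i
    cases hti : tl i with
    | var y => exfalso; have := (hT i).1; rw [hti] at this; exact this
    | app f k ts => exact ⟨f, k, ts, rfl⟩
  have hground : ∀ i, (tl i).vars = ∅ := by
    intro i
    have := fml_maxocc_vars (STerms (FS ∪ GS)) (tl i) Hg hHgQF (hT i).2
    rw [hHgfree] at this
    exact Set.subset_empty_iff.mp this
  have hUtoGS : ∀ j, ¬ isSTerm FS (tl j) → isSTerm GS (tl j) := by
    intro j hj
    have h1 := (hT j).1
    obtain ⟨f, k, ts, htj⟩ := htl_app j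
    rw [htj] at h1 hj ⊢
    rcases h1 with h | h
    · exact absurd h hj
    · exact h
  have hFeGS : ∀ p ∈ Fe.funs, p ∉ GS := by
    intro p hp hpGS
    rcases hf1 hp with h | h
    · have : p ∈ F.funs ∩ GS := ⟨h.1, hpGS⟩
      rw [hFGS] at this
      exact this
    · have : p ∈ FS ∩ GS := ⟨h, hpGS⟩
      rw [hFG] at this
      exact this
  have hHinv : ∀ p ∈ (Fml.inv σ Hg).funs, p ∉ FS ∪ GS := by
    refine inv_fml_funs σ (FS ∪ GS) Hg ?_
    intro t hS hmo
    obtain ⟨i, rfl⟩ := (htl_range t).mpr ⟨hS, hmo⟩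
    refine ⟨v i, ?_, hσ i⟩
    show σ (v i) ≠ Tm.var (v i)
    rw [hσ i]
    obtain ⟨f, k, ts, hts⟩ := htl_app i
    rw [hts]
    exact fun hc => Tm.noConfusion hc
  have hcore : ∀ dd : Fin n → D, (Fml.inv σ Hg).sat M (liftA M' a tl FS v dd n) :=
    fun dd => lifting_core M M' FS GS Hg Fe θ σ tl v a hag hFe hFeQF hFeGS hEnt hHgQF
      hHgfree htl_inj hground hUtoGS hv hσ hσ' hHinv dd
  have hgame : ∀ m k, k ≤ n → n - k = m → ∀ dd : Fin n → D,
      Fml.sat (((List.finRange n).drop k).foldr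
        (fun i acc => if isSTerm FS (tl i) then Fml.exi (v i) acc else Fml.all (v i) acc)
        (Fml.inv σ Hg)) M (liftA M' a tl FS v dd k) := by
    intro m
    induction m with
    | zero =>
        intro k hk hnk dd
        have hkn : k = n := by omega
        have hnil : (List.finRange n).drop k = [] :=
          List.drop_eq_nil_of_le (by simp [hkn])
        rw [hnil, hkn]
        exact hcore dd
    | succ m ih =>
        intro k hk hnk dd
        have hkn : k < n := by omega
        have hdrop : (List.finRange n).drop k = ⟨k, hkn⟩ :: (List.finRange n).drop (k + 1) := by
          rw [List.drop_eq_getElem_cons (by simpa using hkn)]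
          simp
        rw [hdrop, List.foldr_cons]
        by_cases hFSk : isSTerm FS (tl ⟨k, hkn⟩)
        · rw [if_pos hFSk]
          show ∃ e, Fml.sat _ M (Function.update (liftA M' a tl FS v dd k) (v ⟨k, hkn⟩) e)
          refine ⟨liftVal M' a tl FS dd ⟨k, hkn⟩, ?_⟩
          have hupd : Function.update (liftA M' a tl FS v dd k) (v ⟨k, hkn⟩)
              (liftVal M' a tl FS dd ⟨k, hkn⟩) = liftA M' a tl FS v dd (k + 1) := by
            funext x
            by_cases hxk : x = v ⟨k, hkn⟩
            · subst hxk
              rw [Function.update_self,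
                liftA_mem M' a tl FS v hv dd (k + 1) ⟨k, hkn⟩ (by simp)]
            · rw [Function.update_of_ne hxk]
              by_cases hx : ∃ i : Fin n, (i : ℕ) < k ∧ v i = x
              · obtain ⟨i, hik, rfl⟩ := hx
                rw [liftA_mem M' a tl FS v hv dd k i hik,
                  liftA_mem M' a tl FS v hv dd (k + 1) i (by omega)]
              · push_neg at hx
                rw [liftA_nonmem M' a tl FS v dd k x hx,
                  liftA_nonmem M' a tl FS v dd (k + 1) x ?_]
                intro i hik1 hvi
                rcases Nat.lt_succ_iff_lt_or_eq.mp hik1 with h | h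
                · exact hx i h hvi
                · have : i = ⟨k, hkn⟩ := Fin.ext h
                  apply hxk
                  rw [← hvi, this]
          rw [hupd]
          exact ih (k + 1) (by omega) (by omega) dd
        · rw [if_neg hFSk]
          intro e
          have hres := ih (k + 1) (by omega) (by omega) (Function.update dd ⟨k, hkn⟩ e)
          have hupd : liftA M' a tl FS v (Function.update dd ⟨k, hkn⟩ e) (k + 1) =
              Function.update (liftA M' a tl FS v dd k) (v ⟨k, hkn⟩) e := by
            funext x
            by_cases hxk : x = v ⟨k, hkn⟩
            · subst hxk
              rw [Function.update_self,
                liftA_mem M' a tl FS v hv _ (k + 1) ⟨k, hkn⟩ (by simp),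
                liftVal, if_neg hFSk, Function.update_self]
            · rw [Function.update_of_ne hxk]
              by_cases hx : ∃ i : Fin n, (i : ℕ) < k ∧ v i = x
              · obtain ⟨i, hik, rfl⟩ := hx
                rw [liftA_mem M' a tl FS v hv _ (k + 1) i (by omega),
                  liftA_mem M' a tl FS v hv dd k i hik]
                have hik' : i ≠ ⟨k, hkn⟩ := by
                  intro hc
                  rw [hc] at hik
                  simp at hik
                refine liftVal_congr M' a tl FS _ dd i ?_ ?_
                · intro j hjU hocc
                  by_cases hjk : j = ⟨k, hkn⟩
                  · exfalso
                    by_cases hji : tl j = tl i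
                    · apply hik'
                      rw [← hjk]
                      exact (htl_inj hji).symm
                    · have hlt := horder j i ⟨hji, hocc⟩
                      rw [Fin.lt_def] at hlt
                      have hjv : (j : ℕ) = k := by rw [hjk]
                      omega
                  · rw [Function.update_of_ne hjk]
                · intro _
                  rw [Function.update_of_ne hik']
              · push_neg at hx
                rw [liftA_nonmem M' a tl FS v _ (k + 1) x ?_,
                  liftA_nonmem M' a tl FS v dd k x hx]
                intro i hik1 hvi
                rcases Nat.lt_succ_iff_lt_or_eq.mp hik1 with h | h
                · exact hx i h hvi
                · have : i = ⟨k, hkn⟩ := Fin.ext h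
                  apply hxk
                  rw [← hvi, this]
          rw [hupd] at hres
          exact hres
  have h0 := hgame n 0 (Nat.zero_le n) (by omega) (fun _ => e0)
  have ha : liftA M' a tl FS v (fun _ => e0) 0 = a := by
    funext x
    exact liftA_nonmem M' a tl FS v _ 0 x (fun i h => absurd h (Nat.not_lt_zero _))
  rw [List.drop_zero, ha] at h0
  exact h0

end CTIF
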